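/- The number of ternary trees of weight w (w internal nodes, each node having 0 or 3 children) in which no internal node is the leftmost child of another internal node equals the Catalan number C_w = (1/(w+1))·C(2w, w). -/

import Mathlib

/-- An `m`-ary (rooted plane) tree: every node has either no children (a leaf)
or exactly `m` children (an internal node). -/
inductive MTree (m : ℕ) : Type
  | leaf : MTree m
  | node : (Fin m → MTree m) → MTree m

namespace MTree

variable {m : ℕ}

/-- The arity: the number of leaves. -/
def leaves : MTree m → ℕ
  | .leaf => 1
  | .node c => ∑ j, (c j).leaves

/-- The weight: the number of internal nodes. -/
def weight : MTree m → ℕ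
  | .leaf => 0
  | .node c => 1 + ∑ j, (c j).weight

/-- `p.comp i q` is the partial composition `p ∘ᵢ q`: the tree obtained by
identifying leaf `i` of `p` (leaves numbered `1, …, leaves p` from left to
right) with the root of `q`. -/
def comp : MTree m → ℕ → MTree m → MTree m
  | .leaf, i, q => if i = 1 then q else .leaf
  | .node c, i, q => .node fun j => (c j).comp (i - ∑ k, if k < j then (c k).leaves else 0) q

/-- The path sequence: the list of root-to-leaf path lengths, with leaves taken
in left-to-right order. -/
def pathSeq : MTree m → List ℕ
  | .leaf => [0]
  | .node c => (List.ofFn fun j => ((c j).pathSeq).map (· + 1)).flatten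

/-- The basic `m`-ary tree: the unique tree with one internal node. -/
def basic (m : ℕ) : MTree m := .node fun _ => .leaf

end MTree

/-- A ternary tree in which some internal node has an internal node as its
first (leftmost) child; avoiding this pattern means avoiding `t ∘₁ t`. -/
def hasLeftPattern : MTree 3 → Prop
  | .leaf => False
  | .node c => (c 0 ≠ .leaf) ∨ ∃ j, hasLeftPattern (c j)


def encode : Tree Unit → MTree 3
  | .nil => .leaf
  | .node _ l r => .node ![.leaf, encode l, encode r]

def decode : MTree 3 → Tree Unit
  | .leaf => .nil
  | .node c => .node () (decode (c 1)) (decode (c 2))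

lemma weight_encode (t : Tree Unit) : (encode t).weight = t.numNodes := by
  induction t with
  | nil => rfl
  | node _ l r ihl ihr =>
    simp [encode, MTree.weight, Fin.sum_univ_three, ihl, ihr, Tree.numNodes]
    omega

lemma not_pattern_encode (t : Tree Unit) : ¬ hasLeftPattern (encode t) := by
  induction t with
  | nil => simp [encode, hasLeftPattern]
  | node _ l r ihl ihr =>
    simp only [encode, hasLeftPattern]
    push_neg
    refine ⟨by simp, fun j => ?_⟩
    fin_cases j <;> simp [hasLeftPattern, ihl, ihr]

lemma decode_encode (t : Tree Unit) : decode (encode t) = t := by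
  induction t with
  | nil => rfl
  | node _ l r ihl ihr => simp [encode, decode, ihl, ihr]

lemma encode_decode (p : MTree 3) (h : ¬ hasLeftPattern p) : encode (decode p) = p := by
  induction p with
  | leaf => rfl
  | node c ih =>
    simp only [hasLeftPattern, not_or, not_exists, ne_eq, not_not] at h
    obtain ⟨h0, hj⟩ := h
    simp only [decode, encode, ih 1 (hj 1), ih 2 (hj 2)]
    congr 1
    funext j
    fin_cases j <;> simp [h0]

/-- The number of ternary trees of weight `w` in which no internal node is the
leftmost child of another internal node equals the Catalan number `C_w`. -/
theorem card_left_avoiding_ternary_trees (w : ℕ) :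
    Nat.card {p : MTree 3 // p.weight = w ∧ ¬ hasLeftPattern p} = catalan w := by
  have e : {p : MTree 3 // p.weight = w ∧ ¬ hasLeftPattern p} ≃
      {t : Tree Unit // t.numNodes = w} :=
    { toFun := fun p => ⟨decode p.1, by rw [← weight_encode, encode_decode _ p.2.2]; exact p.2.1⟩
      invFun := fun t => ⟨encode t.1, by rw [weight_encode]; exact ⟨t.2, not_pattern_encode _⟩⟩
      left_inv := fun p => Subtype.ext (encode_decode _ p.2.2)
      right_inv := fun t => Subtype.ext (decode_encode _) }
  rw [Nat.card_congr e]
  have e2 : {t : Tree Unit // t.numNodes = w} ≃ (Tree.treesOfNumNodesEq w : Finset (Tree Unit)) :=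
    Equiv.subtypeEquivRight fun t => (BinaryTree.mem_treesOfNumNodesEq).symm
  rw [Nat.card_congr e2, Nat.card_eq_finsetCard, BinaryTree.treesOfNumNodesEq_card_eq_catalan]
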